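/- arXiv:2011.05934 — 4 statements merged into one kernel-verified Lean document; each statement's English description precedes it below -/
import Mathlib

section
/- For every β > 0, the function f_β(x) = ((1/2 − x) + √((1/2 − x)² + β²))/2 is convex on ℝ and (1/β)-smooth; more precisely, its second derivative satisfies 0 ≤ f_β''(x) ≤ 1/β for all x ∈ ℝ. -/
private lemma sh_q_pos (β : ℝ) (hβ : 0 < β) (x : ℝ) : 0 < (1 / 2 - x) ^ 2 + β ^ 2 := by
  positivity

private lemma sh_s_pos (β : ℝ) (hβ : 0 < β) (x : ℝ) :
    0 < Real.sqrt ((1 / 2 - x) ^ 2 + β ^ 2) :=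
  Real.sqrt_pos.2 (sh_q_pos β hβ x)

private lemma sh_hasDeriv (β : ℝ) (hβ : 0 < β) (x : ℝ) :
    HasDerivAt (fun x : ℝ => ((1 / 2 - x) + Real.sqrt ((1 / 2 - x) ^ 2 + β ^ 2)) / 2)
      ((-1 + (2 * (1 / 2 - x) * (-1)) / (2 * Real.sqrt ((1 / 2 - x) ^ 2 + β ^ 2))) / 2) x := by
  have h1 : HasDerivAt (fun x : ℝ => (1 / 2 - x)) (-1) x := by
    simpa using (hasDerivAt_id' x).const_sub (1/2:ℝ)
  have hq : HasDerivAt (fun x : ℝ => (1 / 2 - x) ^ 2 + β ^ 2)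
      (2 * (1 / 2 - x) * (-1)) x := by
    have := ((h1.pow 2).add_const (β ^ 2))
    simpa [mul_comm, mul_assoc, mul_left_comm] using this
  have hs := hq.sqrt (ne_of_gt (sh_q_pos β hβ x))
  simpa [div_eq_mul_inv, mul_comm, mul_assoc, mul_left_comm] using (h1.add hs).div_const 2

private lemma sh_deriv_eq (β : ℝ) (hβ : 0 < β) :
    deriv (fun x : ℝ => ((1 / 2 - x) + Real.sqrt ((1 / 2 - x) ^ 2 + β ^ 2)) / 2)
      = fun x : ℝ =>
        (-1 + (2 * (1 / 2 - x) * (-1)) / (2 * Real.sqrt ((1 / 2 - x) ^ 2 + β ^ 2))) / 2 := by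
  funext x
  exact (sh_hasDeriv β hβ x).deriv

private lemma sh_hasDeriv2 (β : ℝ) (hβ : 0 < β) (x : ℝ) :
    HasDerivAt (fun x : ℝ =>
        (-1 + (2 * (1 / 2 - x) * (-1)) / (2 * Real.sqrt ((1 / 2 - x) ^ 2 + β ^ 2))) / 2)
      (β ^ 2 / (2 * (((1 / 2 - x) ^ 2 + β ^ 2) * Real.sqrt ((1 / 2 - x) ^ 2 + β ^ 2)))) x := by
  have h1 : HasDerivAt (fun x : ℝ => (1 / 2 - x)) (-1) x := by
    simpa using (hasDerivAt_id' x).const_sub (1/2:ℝ)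
  have hq : HasDerivAt (fun x : ℝ => (1 / 2 - x) ^ 2 + β ^ 2)
      (2 * (1 / 2 - x) * (-1)) x := by
    have := ((h1.pow 2).add_const (β ^ 2))
    simpa [mul_comm, mul_assoc, mul_left_comm] using this
  have hs := hq.sqrt (ne_of_gt (sh_q_pos β hβ x))
  have hnum : HasDerivAt (fun x : ℝ => 2 * (1 / 2 - x) * (-1)) 2 x := by
    have := (h1.const_mul 2).mul_const (-1)
    simpa using this
  have hden : HasDerivAt (fun x : ℝ => 2 * Real.sqrt ((1 / 2 - x) ^ 2 + β ^ 2))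
      (2 * (2 * (1 / 2 - x) * (-1) / (2 * Real.sqrt ((1 / 2 - x) ^ 2 + β ^ 2)))) x :=
    hs.const_mul 2
  have hden_ne : 2 * Real.sqrt ((1 / 2 - x) ^ 2 + β ^ 2) ≠ 0 := by
    have := sh_s_pos β hβ x; positivity
  have hdiv := hnum.div hden hden_ne
  have hfull := ((hasDerivAt_const x (-1:ℝ)).add hdiv).div_const 2
  convert hfull using 1
  case e'_4 => rfl
  case e'_5 => rfl
  case e'_8 => rfl
  have hS := sh_s_pos β hβ x
  set u : ℝ := 1 / 2 - x with hu
  set s : ℝ := Real.sqrt (u ^ 2 + β ^ 2) with hsdef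
  have hsne : s ≠ 0 := ne_of_gt hS
  have hsq : s * s = u ^ 2 + β ^ 2 := Real.mul_self_sqrt (le_of_lt (sh_q_pos β hβ x))
  rw [show β ^ 2 = s * s - u ^ 2 by linarith]
  field_simp
  ring

private lemma sh_deriv2_eq (β : ℝ) (hβ : 0 < β) :
    deriv (deriv (fun x : ℝ => ((1 / 2 - x) + Real.sqrt ((1 / 2 - x) ^ 2 + β ^ 2)) / 2))
      = fun x : ℝ =>
        β ^ 2 / (2 * (((1 / 2 - x) ^ 2 + β ^ 2) * Real.sqrt ((1 / 2 - x) ^ 2 + β ^ 2))) := by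
  rw [sh_deriv_eq β hβ]
  funext x
  exact (sh_hasDeriv2 β hβ x).deriv

private lemma sh_bound (β : ℝ) (hβ : 0 < β) (x : ℝ) :
    β ^ 2 / (2 * (((1 / 2 - x) ^ 2 + β ^ 2) * Real.sqrt ((1 / 2 - x) ^ 2 + β ^ 2))) ≤ 1 / β := by
  have hq := sh_q_pos β hβ x
  have hs := sh_s_pos β hβ x
  have hsge : β ≤ Real.sqrt ((1 / 2 - x) ^ 2 + β ^ 2) := by
    have h := Real.sqrt_le_sqrt (show β ^ 2 ≤ (1 / 2 - x) ^ 2 + β ^ 2 by nlinarith)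
    rwa [Real.sqrt_sq hβ.le] at h
  have hqge : β ^ 2 ≤ (1 / 2 - x) ^ 2 + β ^ 2 := by nlinarith
  have hden : β ^ 2 * β ≤ ((1 / 2 - x) ^ 2 + β ^ 2) * Real.sqrt ((1 / 2 - x) ^ 2 + β ^ 2) := by
    exact mul_le_mul hqge hsge hβ.le hq.le
  rw [div_le_div_iff₀ (by positivity) hβ]
  nlinarith [hden]

/-- For every `β > 0`, the smoothed hinge loss
`f_β(x) = ((1/2 − x) + √((1/2 − x)² + β²))/2` is convex on ℝ and `(1/β)`-smooth (its
derivative is `(1/β)`-Lipschitz); more precisely its second derivative satisfies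
`0 ≤ f_β''(x) ≤ 1/β` for all `x`. -/
theorem smoothed_hinge_convex_smooth (β : ℝ) (hβ : 0 < β) :
    ConvexOn ℝ Set.univ
        (fun x : ℝ => ((1 / 2 - x) + Real.sqrt ((1 / 2 - x) ^ 2 + β ^ 2)) / 2) ∧
      LipschitzWith (Real.toNNReal (1 / β))
        (deriv (fun x : ℝ => ((1 / 2 - x) + Real.sqrt ((1 / 2 - x) ^ 2 + β ^ 2)) / 2)) ∧
      ∀ x : ℝ,
        0 ≤ deriv (deriv (fun x : ℝ =>
              ((1 / 2 - x) + Real.sqrt ((1 / 2 - x) ^ 2 + β ^ 2)) / 2)) x ∧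
          deriv (deriv (fun x : ℝ =>
              ((1 / 2 - x) + Real.sqrt ((1 / 2 - x) ^ 2 + β ^ 2)) / 2)) x ≤ 1 / β := by
  have hdiff : Differentiable ℝ
      (fun x : ℝ => ((1 / 2 - x) + Real.sqrt ((1 / 2 - x) ^ 2 + β ^ 2)) / 2) :=
    fun x => (sh_hasDeriv β hβ x).differentiableAt
  have hdiff' : Differentiable ℝ
      (deriv (fun x : ℝ => ((1 / 2 - x) + Real.sqrt ((1 / 2 - x) ^ 2 + β ^ 2)) / 2)) := by
    rw [sh_deriv_eq β hβ]
    exact fun x => (sh_hasDeriv2 β hβ x).differentiableAt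
  have h2 : ∀ x : ℝ,
      deriv (deriv (fun x : ℝ => ((1 / 2 - x) + Real.sqrt ((1 / 2 - x) ^ 2 + β ^ 2)) / 2)) x
        = β ^ 2 / (2 * (((1 / 2 - x) ^ 2 + β ^ 2) * Real.sqrt ((1 / 2 - x) ^ 2 + β ^ 2))) := by
    intro x; rw [sh_deriv2_eq β hβ]
  refine ⟨?_, ?_, ?_⟩
  · apply convexOn_univ_of_deriv2_nonneg hdiff hdiff'
    intro x
    have := h2 x
    simp only [Function.iterate_succ, Function.iterate_zero, Function.comp_apply, id_eq] at *
    rw [this]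
    have := sh_s_pos β hβ x
    positivity
  · apply lipschitzWith_of_nnnorm_deriv_le hdiff'
    intro x
    rw [← NNReal.coe_le_coe]
    have hb : (0:ℝ) ≤ 1 / β := by positivity
    rw [coe_nnnorm, Real.coe_toNNReal _ hb, Real.norm_eq_abs, h2 x]
    have hs := sh_s_pos β hβ x
    have hq := sh_q_pos β hβ x
    rw [abs_of_nonneg (by positivity)]
    exact sh_bound β hβ x
  · intro x
    rw [h2 x]
    have hs := sh_s_pos β hβ x
    have hq := sh_q_pos β hβ x
    exact ⟨by positivity, sh_bound β hβ x⟩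
end

section
/- For every β with 0 < β ≤ 1, the function f_β(x) = ((1/2 − x) + √((1/2 − x)² + β²))/2 satisfies |f_β''(x)| ≤ 3/β² and |f_β'''(x)| ≤ 3/β² for all x ∈ ℝ; in particular the derivative f_β' is (2, 3/β²)-smooth. -/
open Real

namespace SHL

variable (β : ℝ)

noncomputable def s (x : ℝ) : ℝ := Real.sqrt ((1 / 2 - x) ^ 2 + β ^ 2)

noncomputable def d1 (x : ℝ) : ℝ := (-1 - (1 / 2 - x) / s β x) / 2
noncomputable def d2 (x : ℝ) : ℝ := β ^ 2 / (2 * s β x ^ 3)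
noncomputable def d3 (x : ℝ) : ℝ := 3 * β ^ 2 * (1 / 2 - x) / (2 * s β x ^ 5)

variable {β}

lemma inner_pos (hβ : 0 < β) (x : ℝ) : 0 < (1 / 2 - x) ^ 2 + β ^ 2 := by positivity

lemma s_pos (hβ : 0 < β) (x : ℝ) : 0 < s β x := Real.sqrt_pos.mpr (inner_pos hβ x)

lemma s_sq (hβ : 0 < β) (x : ℝ) : s β x ^ 2 = (1 / 2 - x) ^ 2 + β ^ 2 :=
  Real.sq_sqrt (inner_pos hβ x).le

lemma s_ge (hβ : 0 < β) (x : ℝ) : β ≤ s β x := by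
  have := Real.sqrt_le_sqrt (show β ^ 2 ≤ (1 / 2 - x) ^ 2 + β ^ 2 from le_add_of_nonneg_left (sq_nonneg _))
  rwa [Real.sqrt_sq hβ.le] at this

lemma abs_le_s (hβ : 0 < β) (x : ℝ) : |1 / 2 - x| ≤ s β x := by
  have := Real.sqrt_le_sqrt (show (1 / 2 - x) ^ 2 ≤ (1 / 2 - x) ^ 2 + β ^ 2 from le_add_of_nonneg_right (sq_nonneg _))
  rwa [Real.sqrt_sq_eq_abs] at this

lemma hasDerivAt_s (hβ : 0 < β) (x : ℝ) :
    HasDerivAt (s β) (-(1 / 2 - x) / s β x) x := by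
  have hu : HasDerivAt (fun x : ℝ => 1 / 2 - x) (-1) x := (hasDerivAt_id x).const_sub (1 / 2)
  have hinner : HasDerivAt (fun x : ℝ => (1 / 2 - x) ^ 2 + β ^ 2)
      ((2 : ℕ) * (1 / 2 - x) ^ 1 * (-1)) x := (hu.pow 2).add_const _
  have h := hinner.sqrt (ne_of_gt (inner_pos hβ x))
  convert h using 1
  have hs := (s_pos hβ x).ne'
  unfold s
  field_simp
  simp only [s]
  push_cast
  ring

lemma hasDerivAt_f (hβ : 0 < β) (x : ℝ) :
    HasDerivAt (fun x : ℝ => ((1 / 2 - x) + Real.sqrt ((1 / 2 - x) ^ 2 + β ^ 2)) / 2)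
      (d1 β x) x := by
  have hu : HasDerivAt (fun x : ℝ => 1 / 2 - x) (-1) x := (hasDerivAt_id x).const_sub (1 / 2)
  have h := (hu.add (hasDerivAt_s hβ x)).div_const 2
  refine h.congr_deriv (Eq.symm ?_)
  unfold d1
  have hs := (s_pos hβ x).ne'
  field_simp
  ring

lemma hasDerivAt_d1 (hβ : 0 < β) (x : ℝ) : HasDerivAt (d1 β) (d2 β x) x := by
  have hu : HasDerivAt (fun x : ℝ => 1 / 2 - x) (-1) x := (hasDerivAt_id x).const_sub (1 / 2)
  have hdiv := hu.div (hasDerivAt_s hβ x) (s_pos hβ x).ne'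
  have h := ((hdiv.const_sub (-1)).div_const 2 : HasDerivAt (d1 β) _ x)
  refine h.congr_deriv (Eq.symm ?_)
  unfold d2
  have hs := (s_pos hβ x).ne'
  have hsq := s_sq hβ x
  field_simp
  linear_combination (-4) * hsq

lemma hasDerivAt_d2 (hβ : 0 < β) (x : ℝ) : HasDerivAt (d2 β) (d3 β x) x := by
  have hden : HasDerivAt (fun x : ℝ => 2 * s β x ^ 3)
      (2 * ((3 : ℕ) * s β x ^ 2 * (-(1 / 2 - x) / s β x))) x :=
    (((hasDerivAt_s hβ x).pow 3).const_mul 2)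
  have h := (hasDerivAt_const x (β ^ 2)).div hden (mul_pos two_pos (pow_pos (s_pos hβ x) 3)).ne'
  refine h.congr_deriv (Eq.symm ?_)
  unfold d3
  have hs := (s_pos hβ x).ne'
  field_simp
  ring

lemma deriv_f (hβ : 0 < β) :
    deriv (fun x : ℝ => ((1 / 2 - x) + Real.sqrt ((1 / 2 - x) ^ 2 + β ^ 2)) / 2) = d1 β :=
  funext fun x => (hasDerivAt_f hβ x).deriv

end SHL

/-- For `0 < β ≤ 1`, the smoothed hinge loss
`f_β(x) = ((1/2 − x) + √((1/2 − x)² + β²))/2` satisfies `|f_β''(x)| ≤ 3/β²` and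
`|f_β'''(x)| ≤ 3/β²` for all `x`; in particular `f_β` is three times continuously
differentiable, so `f_β'` is `(2, 3/β²)`-smooth. -/
theorem smoothed_hinge_higher_derivs (β : ℝ) (hβ : 0 < β) (hβ1 : β ≤ 1) :
    ContDiff ℝ 3
        (fun x : ℝ => ((1 / 2 - x) + Real.sqrt ((1 / 2 - x) ^ 2 + β ^ 2)) / 2) ∧
      (∀ x : ℝ,
        |iteratedDeriv 2
            (fun x : ℝ => ((1 / 2 - x) + Real.sqrt ((1 / 2 - x) ^ 2 + β ^ 2)) / 2) x| ≤
          3 / β ^ 2) ∧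
      ∀ x : ℝ,
        |iteratedDeriv 3
            (fun x : ℝ => ((1 / 2 - x) + Real.sqrt ((1 / 2 - x) ^ 2 + β ^ 2)) / 2) x| ≤
          3 / β ^ 2 := by
  have hd1 : deriv (fun x : ℝ => ((1 / 2 - x) + Real.sqrt ((1 / 2 - x) ^ 2 + β ^ 2)) / 2)
      = SHL.d1 β := SHL.deriv_f hβ
  have hd2 : deriv (SHL.d1 β) = SHL.d2 β := funext fun x => (SHL.hasDerivAt_d1 hβ x).deriv
  have hd3 : deriv (SHL.d2 β) = SHL.d3 β := funext fun x => (SHL.hasDerivAt_d2 hβ x).deriv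
  have h2 : iteratedDeriv 2
      (fun x : ℝ => ((1 / 2 - x) + Real.sqrt ((1 / 2 - x) ^ 2 + β ^ 2)) / 2) = SHL.d2 β := by
    rw [iteratedDeriv_succ, iteratedDeriv_one, hd1, hd2]
  have h3 : iteratedDeriv 3
      (fun x : ℝ => ((1 / 2 - x) + Real.sqrt ((1 / 2 - x) ^ 2 + β ^ 2)) / 2) = SHL.d3 β := by
    rw [iteratedDeriv_succ, h2, hd3]
  refine ⟨?_, ?_, ?_⟩
  · have hsqrt : ContDiff ℝ 3 (fun x : ℝ => Real.sqrt ((1 / 2 - x) ^ 2 + β ^ 2)) := by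
      rw [contDiff_iff_contDiffAt]
      intro x
      exact ContDiffAt.sqrt (((contDiff_const.sub contDiff_id).pow 2).add contDiff_const).contDiffAt
        (SHL.inner_pos hβ x).ne'
    exact ((contDiff_const.sub contDiff_id).add hsqrt).div_const 2
  · intro x
    rw [h2]
    have hs := SHL.s_pos hβ x
    have hge := SHL.s_ge hβ x
    have h0 : 0 ≤ SHL.d2 β x := by
      unfold SHL.d2
      exact div_nonneg (by positivity) (le_of_lt (mul_pos two_pos (pow_pos hs 3)))
    rw [abs_of_nonneg h0]
    unfold SHL.d2
    rw [div_le_div_iff₀ (mul_pos two_pos (pow_pos hs 3)) (by positivity)]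
    nlinarith [pow_le_pow_left₀ hβ.le hge 3, pow_le_pow_of_le_one hβ.le hβ1 (show 3 ≤ 4 by norm_num)]
  · intro x
    rw [h3]
    have hs := SHL.s_pos hβ x
    have hge := SHL.s_ge hβ x
    have habs := SHL.abs_le_s hβ x
    unfold SHL.d3
    rw [abs_div, abs_of_nonneg (le_of_lt (mul_pos two_pos (pow_pos hs 5))),
      div_le_div_iff₀ (mul_pos two_pos (pow_pos hs 5)) (by positivity), abs_mul,
      abs_of_nonneg (by positivity : (0:ℝ) ≤ 3 * β ^ 2)]
    have h5 : β ^ 4 ≤ SHL.s β x ^ 4 := pow_le_pow_left₀ hβ.le hge 4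
    nlinarith [mul_le_mul habs h5 (by positivity : (0:ℝ) ≤ β ^ 4) hs.le, pow_pos hs 5]
end

section
/- Let f : [−1, 1] → [−1, 1] be a 1-Lipschitz convex function, let d₋ denote its right derivative at −1 and d₊ its left derivative at 1. Then there exist a probability measure Q supported on [−1, 1] and a constant c ∈ ℝ such that for every θ ∈ [−1, 1], f(θ) = ((d₊ − d₋)/2) · ∫_{[−1,1]} |θ − s| dQ(s) + ((d₊ + d₋)/2) · θ + c. (The measure Q can be taken to be the distribution of s(u) for u uniform on [d₋, d₊], where s(u) is the largest point s with u in the subdifferential ∂f(s).) -/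
open MeasureTheory

open Set Filter Topology

namespace LCARaux

variable {f : ℝ → ℝ} {dm dp : ℝ}

/-- The (extended) right-derivative of `f`, clamped to `[-1,1]`. -/
noncomputable def g (f : ℝ → ℝ) (dp : ℝ) (t : ℝ) : ℝ :=
  if t < 1 then sInf (slope f (max t (-1)) '' Set.Ioo (max t (-1)) 1) else dp

lemma slope_ge (hconv : ConvexOn ℝ (Set.Icc (-1 : ℝ) 1) f)
    (hdm : HasDerivWithinAt f dm (Set.Icc (-1 : ℝ) 1) (-1))
    {t y : ℝ} (ht : -1 ≤ t) (hty : t < y) (hy : y ≤ 1) : dm ≤ slope f t y := by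
  rcases eq_or_lt_of_le ht with rfl | h
  · exact hconv.le_slope_of_hasDerivWithinAt (by constructor <;> norm_num)
      ⟨by linarith, hy⟩ hty hdm
  · have h1 : dm ≤ slope f (-1) t :=
      hconv.le_slope_of_hasDerivWithinAt (by constructor <;> norm_num)
        ⟨ht, by linarith⟩ h hdm
    have h2 : slope f t (-1) ≤ slope f t y := by
      have := hconv.slope_mono (x := t) ⟨ht, by linarith⟩
      exact this ⟨⟨le_refl (-1), by linarith⟩, by simp; linarith⟩
        ⟨⟨by linarith, by linarith⟩, by simp; linarith⟩ (by linarith)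
    rw [slope_comm] at h2
    linarith

lemma slope_le (hconv : ConvexOn ℝ (Set.Icc (-1 : ℝ) 1) f)
    (hdp : HasDerivWithinAt f dp (Set.Icc (-1 : ℝ) 1) 1)
    {t y : ℝ} (ht : -1 ≤ t) (hty : t < y) (hy : y ≤ 1) : slope f t y ≤ dp := by
  rcases eq_or_lt_of_le hy with rfl | h
  · exact hconv.slope_le_of_hasDerivWithinAt ⟨ht, by linarith⟩
      (by constructor <;> norm_num) hty hdp
  · have h1 : slope f y 1 ≤ dp :=
      hconv.slope_le_of_hasDerivWithinAt ⟨by linarith, hy⟩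
        (by constructor <;> norm_num) h hdp
    have h2 : slope f y t ≤ slope f y 1 := by
      have := hconv.slope_mono (x := y) ⟨by linarith, hy⟩
      exact this ⟨⟨by linarith, by linarith⟩, by simp; linarith⟩
        ⟨⟨by linarith, le_refl 1⟩, by simp; linarith⟩ (by linarith)
    rw [slope_comm] at h2
    linarith

end LCARaux

namespace LCARaux

variable {f : ℝ → ℝ} {dm dp : ℝ}

lemma g_eq {t : ℝ} (ht : -1 ≤ t) (h1 : t < 1) :
    g f dp t = sInf (slope f t '' Set.Ioo t 1) := by
  rw [g, if_pos h1, max_eq_left ht]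

lemma bddBelow_slopes (hconv : ConvexOn ℝ (Set.Icc (-1 : ℝ) 1) f)
    (hdm : HasDerivWithinAt f dm (Set.Icc (-1 : ℝ) 1) (-1))
    {t : ℝ} (ht : -1 ≤ t) : BddBelow (slope f t '' Set.Ioo t 1) := by
  refine ⟨dm, fun v hv => ?_⟩
  obtain ⟨y, hy, rfl⟩ := hv
  exact slope_ge hconv hdm ht hy.1 hy.2.le

lemma dm_le_dp (hconv : ConvexOn ℝ (Set.Icc (-1 : ℝ) 1) f)
    (hdm : HasDerivWithinAt f dm (Set.Icc (-1 : ℝ) 1) (-1))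
    (hdp : HasDerivWithinAt f dp (Set.Icc (-1 : ℝ) 1) 1) : dm ≤ dp :=
  le_trans (slope_ge hconv hdm (le_refl _) (by norm_num) (le_refl _))
    (slope_le hconv hdp (le_refl _) (by norm_num) (le_refl _))

lemma dm_le_g (hconv : ConvexOn ℝ (Set.Icc (-1 : ℝ) 1) f)
    (hdm : HasDerivWithinAt f dm (Set.Icc (-1 : ℝ) 1) (-1))
    (hdp : HasDerivWithinAt f dp (Set.Icc (-1 : ℝ) 1) 1) (t : ℝ) : dm ≤ g f dp t := by
  rw [g]
  split_ifs with h
  · refine le_csInf ?_ fun v hv => ?_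
    · refine ⟨slope f (max t (-1)) ((max t (-1) + 1)/2), ⟨(max t (-1) + 1)/2, ?_, rfl⟩⟩
      have h1 : max t (-1) < 1 := max_lt h (by norm_num)
      have h2 : -1 ≤ max t (-1) := le_max_right _ _
      exact ⟨by linarith, by linarith⟩
    · obtain ⟨y, hy, rfl⟩ := hv
      exact slope_ge hconv hdm (le_max_right _ _) hy.1 hy.2.le
  · exact dm_le_dp hconv hdm hdp

lemma g_le_dp (hconv : ConvexOn ℝ (Set.Icc (-1 : ℝ) 1) f)
    (hdm : HasDerivWithinAt f dm (Set.Icc (-1 : ℝ) 1) (-1))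
    (hdp : HasDerivWithinAt f dp (Set.Icc (-1 : ℝ) 1) 1) (t : ℝ) : g f dp t ≤ dp := by
  rw [g]
  split_ifs with h
  · have h1 : max t (-1) < 1 := max_lt h (by norm_num)
    have h2 : -1 ≤ max t (-1) := le_max_right _ _
    refine csInf_le_of_le (bddBelow_slopes hconv hdm h2)
      ⟨(max t (-1) + 1)/2, ⟨by linarith, by linarith⟩, rfl⟩ ?_
    exact slope_le hconv hdp h2 (by linarith) (by linarith)
  · exact le_refl _

lemma tendsto_slope_g (hconv : ConvexOn ℝ (Set.Icc (-1 : ℝ) 1) f)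
    (hdm : HasDerivWithinAt f dm (Set.Icc (-1 : ℝ) 1) (-1))
    {t : ℝ} (ht : -1 ≤ t) (h1 : t < 1) :
    Tendsto (slope f t) (𝓝[>] t) (𝓝 (g f dp t)) := by
  rw [g_eq ht h1]
  refine MonotoneOn.tendsto_nhdsWithin_Ioo_right ⟨(t+1)/2, by constructor <;> linarith⟩
    ?_ (bddBelow_slopes hconv hdm ht)
  intro a ha b hb hab
  exact hconv.slope_mono (x := t) ⟨ht, h1.le⟩
    ⟨⟨by linarith [ha.1], by linarith [ha.2]⟩, by simp; linarith [ha.1]⟩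
    ⟨⟨by linarith [hb.1], by linarith [hb.2]⟩, by simp; linarith [hb.1]⟩ hab

lemma hasDeriv_g (hconv : ConvexOn ℝ (Set.Icc (-1 : ℝ) 1) f)
    (hdm : HasDerivWithinAt f dm (Set.Icc (-1 : ℝ) 1) (-1))
    {t : ℝ} (ht : -1 ≤ t) (h1 : t < 1) :
    HasDerivWithinAt f (g f dp t) (Set.Ioi t) t := by
  rw [hasDerivWithinAt_iff_tendsto_slope' (s := Set.Ioi t) (by simp)]
  exact tendsto_slope_g hconv hdm ht h1

lemma g_neg_one (hconv : ConvexOn ℝ (Set.Icc (-1 : ℝ) 1) f)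
    (hdm : HasDerivWithinAt f dm (Set.Icc (-1 : ℝ) 1) (-1)) :
    g f dp (-1) = dm := by
  have h2 : HasDerivWithinAt f (g f dp (-1)) (Set.Icc (-1 : ℝ) 1) (-1) := by
    rw [hasDerivWithinAt_iff_tendsto_slope]
    refine (tendsto_slope_g hconv hdm (le_refl _) (by norm_num)).mono_left
      (nhdsWithin_mono _ ?_)
    intro x hx
    exact lt_of_le_of_ne hx.1.1 (fun h => hx.2 h.symm)
  have hu : UniqueDiffWithinAt ℝ (Set.Icc (-1 : ℝ) 1) (-1) :=
    uniqueDiffOn_Icc (by norm_num) _ (by constructor <;> norm_num)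
  rw [← hdm.derivWithin hu, ← h2.derivWithin hu]

end LCARaux

namespace LCARaux

variable {f : ℝ → ℝ} {dm dp : ℝ}

lemma g_mono (hconv : ConvexOn ℝ (Set.Icc (-1 : ℝ) 1) f)
    (hdm : HasDerivWithinAt f dm (Set.Icc (-1 : ℝ) 1) (-1))
    (hdp : HasDerivWithinAt f dp (Set.Icc (-1 : ℝ) 1) 1) : Monotone (g f dp) := by
  intro a b hab
  by_cases hb : b < 1
  · have ha : a < 1 := lt_of_le_of_lt hab hb
    set xa := max a (-1) with hxa
    set xb := max b (-1) with hxb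
    have hxab : xa ≤ xb := max_le_max hab (le_refl _)
    have hxa1 : -1 ≤ xa := le_max_right _ _
    have hxb1 : -1 ≤ xb := le_max_right _ _
    have hxalt : xa < 1 := max_lt ha (by norm_num)
    have hxblt : xb < 1 := max_lt hb (by norm_num)
    rcases eq_or_lt_of_le hxab with heq | hlt
    · simp only [g, if_pos ha, if_pos hb, ← hxa, ← hxb, heq]
      exact le_refl _
    · simp only [g, if_pos ha, if_pos hb, ← hxa, ← hxb]
      refine le_csInf ⟨slope f xb ((xb+1)/2), ⟨(xb+1)/2, ⟨by linarith, by linarith⟩, rfl⟩⟩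
        fun v hv => ?_
      obtain ⟨y, hy, rfl⟩ := hv
      have h1 : slope f xa y ≤ slope f xb y := by
        have hmem : y ∈ Set.Icc (-1 : ℝ) 1 := ⟨by linarith [hy.1], hy.2.le⟩
        have := hconv.slope_mono (x := y) hmem
        have h2 := this ⟨⟨hxa1, by linarith [hy.1]⟩, by simp; linarith [hy.1]⟩
          ⟨⟨hxb1, by linarith [hy.1]⟩, by simp [hy.1.ne]⟩ hxab
        rw [slope_comm f y xa, slope_comm f y xb] at h2
        exact h2
      exact csInf_le_of_le (bddBelow_slopes hconv hdm hxa1)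
        ⟨y, ⟨lt_trans hlt hy.1, hy.2⟩, rfl⟩ h1
  · have hgb : g f dp b = dp := by rw [g, if_neg hb]
    rw [hgb]
    exact g_le_dp hconv hdm hdp a

lemma g_rc (hconv : ConvexOn ℝ (Set.Icc (-1 : ℝ) 1) f)
    (hlip : LipschitzOnWith 1 f (Set.Icc (-1 : ℝ) 1))
    (hdm : HasDerivWithinAt f dm (Set.Icc (-1 : ℝ) 1) (-1))
    (hdp : HasDerivWithinAt f dp (Set.Icc (-1 : ℝ) 1) 1) (x : ℝ) :
    ContinuousWithinAt (g f dp) (Set.Ici x) x := by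
  rw [← continuousWithinAt_Ioi_iff_Ici]
  by_cases hx : 1 ≤ x
  · have hgx : g f dp x = dp := by rw [g, if_neg (not_lt.mpr hx)]
    unfold ContinuousWithinAt
    rw [hgx]
    refine Tendsto.congr' ?_ (tendsto_const_nhds (x := dp))
    filter_upwards [self_mem_nhdsWithin] with u hu
    rw [g, if_neg (by push_neg; linarith [Set.mem_Ioi.mp hu])]
  · push_neg at hx
    have hmono := g_mono hconv hdm hdp
    have htend := hmono.tendsto_nhdsGT x
    have hbdd : BddBelow (g f dp '' Set.Ioi x) :=
      ⟨dm, fun v hv => by obtain ⟨u, _, rfl⟩ := hv; exact dm_le_g hconv hdm hdp u⟩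
    have hinf : sInf (g f dp '' Set.Ioi x) = g f dp x := by
      refine le_antisymm ?_ ?_
      · by_contra hcon
        push_neg at hcon
        set c := sInf (g f dp '' Set.Ioi x) with hc
        set xc := max x (-1) with hxc
        have hxcx : x ≤ xc := le_max_left _ _
        have hxc1 : -1 ≤ xc := le_max_right _ _
        have hxclt : xc < 1 := max_lt hx (by norm_num)
        have hgxe : g f dp x = sInf (slope f xc '' Set.Ioo xc 1) := by
          rw [g, if_pos hx]
        have hne : (slope f xc '' Set.Ioo xc 1).Nonempty :=
          ⟨_, ⟨(xc+1)/2, ⟨by linarith, by linarith⟩, rfl⟩⟩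
        have hlt0 : sInf (slope f xc '' Set.Ioo xc 1) < c := by rw [← hgxe]; exact hcon
        obtain ⟨v, ⟨y, hy, rfl⟩, hv⟩ := exists_lt_of_csInf_lt hne hlt0
        have hfc : Tendsto f (𝓝[>] xc) (𝓝 (f xc)) := by
          have h1 : ContinuousWithinAt f (Set.Icc (-1 : ℝ) 1) xc :=
            hlip.continuousOn xc ⟨hxc1, hxclt.le⟩
          have h2 : 𝓝[>] xc = 𝓝[Set.Ioc xc 1] xc :=
            (nhdsWithin_Ioc_eq_nhdsGT hxclt).symm
          rw [h2]
          exact h1.mono_left (nhdsWithin_mono _ (fun u hu => ⟨by linarith [hu.1], hu.2⟩))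
        have hid : Tendsto (fun u : ℝ => u) (𝓝[>] xc) (𝓝 xc) :=
          tendsto_id.mono_left nhdsWithin_le_nhds
        have hts : Tendsto (fun u => (f y - f u) / (y - u)) (𝓝[>] xc)
            (𝓝 ((f y - f xc) / (y - xc))) := by
          refine Tendsto.div (tendsto_const_nhds.sub hfc) (tendsto_const_nhds.sub hid) ?_
          intro h; have := sub_eq_zero.mp h; linarith [hy.1]
        have hlt : (f y - f xc) / (y - xc) < c := by
          rw [slope_def_field] at hv; exact hv
        have hev : ∀ᶠ u in 𝓝[>] xc, (f y - f u) / (y - u) < c :=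
          hts.eventually_lt_const hlt
        have hmem : Set.Ioo xc y ∈ 𝓝[>] xc := Ioo_mem_nhdsGT hy.1
        obtain ⟨u, hu1, hu2⟩ := (hev.and (eventually_mem_set.mpr hmem)).exists
        have hu1' : -1 ≤ u := le_trans hxc1 hu2.1.le
        have hu3 : u < 1 := lt_trans hu2.2 hy.2
        have hgu : g f dp u ≤ (f y - f u) / (y - u) := by
          rw [g_eq hu1' hu3]
          refine csInf_le_of_le (bddBelow_slopes hconv hdm hu1')
            ⟨y, ⟨hu2.2, hy.2⟩, rfl⟩ ?_
          rw [slope_def_field]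
        have : c ≤ g f dp u := csInf_le hbdd ⟨u, lt_of_le_of_lt hxcx hu2.1, rfl⟩
        linarith
      · refine le_csInf ⟨g f dp (x+1), ⟨x+1, by simp, rfl⟩⟩ fun v hv => ?_
        obtain ⟨u, hu, rfl⟩ := hv
        exact hmono (le_of_lt hu)
    rw [hinf] at htend
    exact htend

end LCARaux

open LCARaux

/-- Every 1-Lipschitz convex function `f : [−1,1] → [−1,1]` with one-sided derivatives
`d₋ = f'₊(−1)` and `d₊ = f'₋(1)` can be written, for some Borel probability measure `Q`
supported on `[−1,1]` and some constant `c`, as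
`f(θ) = ((d₊ − d₋)/2) ∫ |θ − s| dQ(s) + ((d₊ + d₋)/2) θ + c` for all `θ ∈ [−1,1]`. -/
theorem lipschitz_convex_abs_representation
    (f : ℝ → ℝ) (hconv : ConvexOn ℝ (Set.Icc (-1 : ℝ) 1) f)
    (hlip : LipschitzOnWith 1 f (Set.Icc (-1 : ℝ) 1))
    (hmap : Set.MapsTo f (Set.Icc (-1 : ℝ) 1) (Set.Icc (-1 : ℝ) 1))
    (dm dp : ℝ)
    (hdm : HasDerivWithinAt f dm (Set.Icc (-1 : ℝ) 1) (-1))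
    (hdp : HasDerivWithinAt f dp (Set.Icc (-1 : ℝ) 1) 1) :
    ∃ (Q : Measure ℝ), IsProbabilityMeasure Q ∧ Q (Set.Icc (-1 : ℝ) 1)ᶜ = 0 ∧
      ∃ c : ℝ, ∀ θ ∈ Set.Icc (-1 : ℝ) 1,
        f θ = (dp - dm) / 2 * (∫ s, |θ - s| ∂Q) + (dp + dm) / 2 * θ + c := by
  classical
  have hdmdp := dm_le_dp hconv hdm hdp
  have hgmono := g_mono hconv hdm hdp
  have hgmeas : Measurable (g f dp) := hgmono.measurable
  -- FTC: `f θ - f (-1) = ∫_{-1}^θ g`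
  have hFTC : ∀ θ ∈ Set.Icc (-1 : ℝ) 1,
      ∫ t in (-1)..θ, g f dp t = f θ - f (-1) := by
    intro θ hθ
    refine intervalIntegral.integral_eq_sub_of_hasDeriv_right_of_le hθ.1
      (hlip.continuousOn.mono (Set.Icc_subset_Icc le_rfl hθ.2)) ?_ ?_
    · intro x hx
      exact hasDeriv_g hconv hdm (by linarith [hx.1]) (by linarith [hx.2, hθ.2])
    · exact hgmono.intervalIntegrable
  rcases eq_or_lt_of_le hdmdp with heq | hlt
  · -- degenerate case: `g ≡ dm` and `f` is affine
    subst heq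
    have hgconst : ∀ t, g f dm t = dm := fun t =>
      le_antisymm (g_le_dp hconv hdm hdp t) (dm_le_g hconv hdm hdp t)
    refine ⟨Measure.dirac 0, by infer_instance, ?_, f (-1) + dm, ?_⟩
    · rw [Measure.dirac_apply' _ (measurableSet_Icc.compl)]
      simp [Set.indicator_apply]
    · intro θ hθ
      have h1 := hFTC θ hθ
      simp_rw [hgconst] at h1
      rw [intervalIntegral.integral_const] at h1
      have : f θ = f (-1) + (θ + 1) * dm := by
        rw [smul_eq_mul] at h1; linarith
      rw [this]; ring
  · -- main case
    set G : StieltjesFunction ℝ :=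
      ⟨g f dp, hgmono, g_rc hconv hlip hdm hdp⟩ with hGdef
    have hGcoe : ∀ t, G t = g f dp t := fun t => rfl
    have hGm1 : G (-1) = dm := g_neg_one hconv hdm
    have hbot : Tendsto (⇑G) atBot (𝓝 dm) := by
      refine Tendsto.congr' ?_ (tendsto_const_nhds (x := dm))
      filter_upwards [Filter.Iic_mem_atBot (-1 : ℝ)] with t ht
      have hteq : g f dp t = g f dp (-1) := by
        rw [g, g, if_pos (by linarith [Set.mem_Iic.mp ht] : t < (1:ℝ)),
          if_pos (by norm_num : (-1:ℝ) < 1),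
          max_eq_right (Set.mem_Iic.mp ht), max_self]
      show dm = g f dp t
      rw [hteq, g_neg_one hconv hdm]
    have htop : Tendsto (⇑G) atTop (𝓝 dp) := by
      refine Tendsto.congr' ?_ (tendsto_const_nhds (x := dp))
      filter_upwards [Filter.Ici_mem_atTop (1 : ℝ)] with t ht
      show dp = g f dp t
      rw [g, if_neg (not_lt.mpr (Set.mem_Ici.mp ht))]
    set μ := G.measure with hμdef
    have hfin : IsFiniteMeasure μ := G.isFiniteMeasure hbot htop
    have huniv : μ Set.univ = ENNReal.ofReal (dp - dm) := G.measure_univ hbot htop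
    have hIic : μ (Set.Iic (-1)) = 0 := by
      rw [G.measure_Iic hbot, hGm1, sub_self, ENNReal.ofReal_zero]
    have hG1 : G (1:ℝ) = dp := by
      show g f dp 1 = dp
      rw [g, if_neg (by norm_num)]
    have hIic1 : μ (Set.Iic 1) = ENNReal.ofReal (dp - dm) := by
      rw [G.measure_Iic hbot, hG1]
    have hIoi1 : μ (Set.Ioi 1) = 0 := by
      have h0 := measure_compl (μ := μ) (s := Set.Iic (1:ℝ)) measurableSet_Iic
        (measure_ne_top μ _)
      rw [Set.compl_Iic] at h0
      rw [h0, hIic1, huniv, tsub_self]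
    have hcomp : μ (Set.Icc (-1 : ℝ) 1)ᶜ = 0 := by
      refine measure_mono_null ?_ (measure_union_null hIic hIoi1)
      intro s hs
      simp only [Set.mem_compl_iff, Set.mem_Icc, not_and_or, not_le] at hs
      rcases hs with h | h
      · exact Or.inl (le_of_lt h)
      · exact Or.inr h
    set c0 : ENNReal := ENNReal.ofReal (dp - dm) with hc0def
    have hc0ne : c0 ≠ 0 := by
      simp [hc0def, ENNReal.ofReal_eq_zero]; linarith
    have hc0top : c0 ≠ ⊤ := ENNReal.ofReal_ne_top
    refine ⟨c0⁻¹ • μ, ⟨?_⟩, ?_, ?_⟩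
    · rw [Measure.smul_apply, smul_eq_mul, huniv,
        ENNReal.inv_mul_cancel hc0ne hc0top]
    · rw [Measure.smul_apply, smul_eq_mul, hcomp, mul_zero]
    set Q : Measure ℝ := c0⁻¹ • μ with hQdef
    have hQprob : IsProbabilityMeasure Q :=
      ⟨by rw [hQdef, Measure.smul_apply, smul_eq_mul, huniv,
        ENNReal.inv_mul_cancel hc0ne hc0top]⟩
    have hμQ : μ = c0 • Q := by
      rw [hQdef, smul_smul, ENNReal.mul_inv_cancel hc0ne hc0top, one_smul]
    -- a.e. facts for Q
    have hQae : ∀ᵐ s ∂Q, s ∈ Set.Icc (-1 : ℝ) 1 := by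
      rw [ae_iff]
      rw [hQdef, Measure.smul_apply, smul_eq_mul]
      rw [show {a | ¬ a ∈ Set.Icc (-1:ℝ) 1} = (Set.Icc (-1:ℝ) 1)ᶜ from rfl, hcomp, mul_zero]
    -- integrability wrt Q
    have hint_id : Integrable (fun s : ℝ => s) Q := by
      refine Integrable.mono' (integrable_const (1 : ℝ))
        continuous_id.aestronglyMeasurable ?_
      filter_upwards [hQae] with s hs
      rw [Real.norm_eq_abs, abs_le]
      exact ⟨hs.1, hs.2⟩
    have hint_abs : ∀ θ : ℝ, θ ∈ Set.Icc (-1:ℝ) 1 →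
        Integrable (fun s : ℝ => |θ - s|) Q := by
      intro θ hθ
      refine Integrable.mono' (integrable_const (2 : ℝ))
        ((continuous_const.sub continuous_id).abs.aestronglyMeasurable) ?_
      filter_upwards [hQae] with s hs
      rw [Real.norm_eq_abs, abs_abs]
      have h1 : |θ| ≤ 1 := abs_le.mpr ⟨hθ.1, hθ.2⟩
      have h2 : |s| ≤ 1 := abs_le.mpr ⟨hs.1, hs.2⟩
      calc |θ - s| ≤ |θ| + |s| := abs_sub _ _
        _ ≤ 2 := by linarith
    refine ⟨f (-1) + dm - (dp - dm) / 2 * (∫ s, s ∂Q), ?_⟩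
    intro θ hθ
    haveI := hfin
    haveI := hQprob
    have hθ1 : (-1:ℝ) ≤ θ := hθ.1
    -- the key Fubini identity
    have hkey : ∫ t in (-1)..θ, (g f dp t - dm) = ∫ s, max (θ - s) 0 ∂μ := by
      set ν := volume.restrict (Set.Ioc (-1:ℝ) θ) with hνdef
      haveI hνfin : IsFiniteMeasure ν := ⟨by
        rw [hνdef, Measure.restrict_apply_univ, Real.volume_Ioc]
        exact ENNReal.ofReal_lt_top⟩
      set S : Set (ℝ × ℝ) := {p | -1 < p.2 ∧ p.2 ≤ p.1} with hSdef
      have hSm : MeasurableSet S :=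
        (measurableSet_lt measurable_const measurable_snd).inter
          (measurableSet_le measurable_snd measurable_fst)
      have h1 : (ν.prod μ) S = ∫⁻ t, ENNReal.ofReal (g f dp t - dm) ∂ν := by
        rw [Measure.prod_apply hSm]
        refine lintegral_congr fun t => ?_
        have hp : (Prod.mk t ⁻¹' S) = Set.Ioc (-1) t := by
          ext s; simp [hSdef, Set.mem_Ioc]
        rw [hp, hμdef, G.measure_Ioc, hGm1]
      have haeμ : ∀ᵐ s ∂μ, -1 < s := by
        rw [ae_iff]
        refine measure_mono_null (fun s hs => ?_) hIic
        simp only [Set.mem_setOf_eq, not_lt] at hs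
        exact hs
      have h2 : (ν.prod μ) S = ∫⁻ s, ENNReal.ofReal (θ - s) ∂μ := by
        rw [Measure.prod_apply_symm hSm]
        refine lintegral_congr_ae ?_
        filter_upwards [haeμ] with s hs
        have hp : ((fun t => (t, s)) ⁻¹' S) = Set.Ici s := by
          ext t; simp [hSdef, hs]
        have hset : Set.Ici s ∩ Set.Ioc (-1) θ = Set.Icc s θ := by
          ext u
          simp only [Set.mem_inter_iff, Set.mem_Ici, Set.mem_Ioc, Set.mem_Icc]
          constructor
          · rintro ⟨ha, _, hc⟩; exact ⟨ha, hc⟩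
          · rintro ⟨ha, hb⟩; exact ⟨ha, lt_of_lt_of_le hs ha, hb⟩
        rw [hp, hνdef, Measure.restrict_apply measurableSet_Ici, hset, Real.volume_Icc]
      have h4 : ∫ t in (-1)..θ, (g f dp t - dm)
          = (∫⁻ t, ENNReal.ofReal (g f dp t - dm) ∂ν).toReal := by
        rw [intervalIntegral.integral_of_le hθ1, hνdef]
        rw [integral_eq_lintegral_of_nonneg_ae
          (Filter.Eventually.of_forall fun t => sub_nonneg.mpr (dm_le_g hconv hdm hdp t))
          ((hgmeas.sub measurable_const).aestronglyMeasurable)]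
      have h5 : ∫ s, max (θ - s) 0 ∂μ = (∫⁻ s, ENNReal.ofReal (θ - s) ∂μ).toReal := by
        rw [integral_eq_lintegral_of_nonneg_ae (f := fun s : ℝ => max (θ - s) 0) (μ := μ)
          (Filter.Eventually.of_forall fun s => le_max_right _ _)
          (((continuous_const.sub continuous_id').max continuous_const).aestronglyMeasurable)]
        congr 1
        refine lintegral_congr fun s => ?_
        rcases le_total (θ - s) 0 with h | h
        · simp [max_eq_right h, ENNReal.ofReal_eq_zero.mpr h]
        · rw [max_eq_left h]
      rw [h4, ← h1, h2, ← h5]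
    -- split the FTC integral
    have hgint : IntervalIntegrable (g f dp) volume (-1) θ := hgmono.intervalIntegrable
    have hsplit : ∫ t in (-1)..θ, (g f dp t - dm)
        = (f θ - f (-1)) - dm * (θ + 1) := by
      rw [intervalIntegral.integral_sub hgint intervalIntegrable_const,
        hFTC θ hθ, intervalIntegral.integral_const, smul_eq_mul]
      ring
    have hsmul : ∫ s, max (θ - s) 0 ∂μ = (dp - dm) * ∫ s, max (θ - s) 0 ∂Q := by
      rw [hμQ, integral_smul_measure, smul_eq_mul, hc0def,
        ENNReal.toReal_ofReal (by linarith)]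
    have hmax_eq : ∀ s : ℝ, max (θ - s) 0 = (|θ - s| + (θ - s)) / 2 := fun s => by
      rcases le_total (θ - s) 0 with h | h
      · rw [max_eq_right h, abs_of_nonpos h]; ring
      · rw [max_eq_left h, abs_of_nonneg h]; ring
    have hintsub : Integrable (fun s : ℝ => θ - s) Q :=
      (integrable_const θ).sub hint_id
    have hQmax : ∫ s, max (θ - s) 0 ∂Q
        = ((∫ s, |θ - s| ∂Q) + (θ - ∫ s, s ∂Q)) / 2 := by
      simp_rw [hmax_eq]
      rw [integral_div, integral_add (hint_abs θ hθ) hintsub,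
        integral_sub (integrable_const θ) hint_id, integral_const]
      simp
    have h6 : f θ - f (-1) - dm * (θ + 1)
        = (dp - dm) * (((∫ s, |θ - s| ∂Q) + (θ - ∫ s, s ∂Q)) / 2) := by
      rw [← hQmax, ← hsmul, ← hkey, hsplit]
    linear_combination h6
end

section
/- For all positive integers h, k and p, and every w = (w₁, …, w_p) ∈ [0, 1]^p, it holds that Σ_{v ∈ {0,…,k}^p} Π_{i=1}^p |b^{(h)}_{v_i,k}(w_i)| ≤ (2^h − 1)^p, where b^{(h)}_{v,k} are the iterated Bernstein basis functions of order h. -/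
/-- The Bernstein basis polynomial `b_{v,k}(x) = C(k,v) xᵛ (1−x)^{k−v}`. -/
noncomputable def bernBasis (k v : ℕ) (x : ℝ) : ℝ :=
  (k.choose v : ℝ) * x ^ v * (1 - x) ^ (k - v)

/-- The Bernstein operator `B_k(g; x) = Σ_{v=0}^k g(v/k) b_{v,k}(x)`. -/
noncomputable def bernOp (k : ℕ) (g : ℝ → ℝ) : ℝ → ℝ :=
  fun x => ∑ v ∈ Finset.range (k + 1), g ((v : ℝ) / k) * bernBasis k v x

/-- The iterated Bernstein basis function of order `h`:
`b^{(h)}_{v,k}(x) = Σ_{i=1}^h C(h,i) (−1)^{i−1} B_k^{i−1}(b_{v,k}; x)`. -/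
noncomputable def iterBernBasis (h k v : ℕ) (x : ℝ) : ℝ :=
  ∑ i ∈ Finset.Icc 1 h,
    (h.choose i : ℝ) * (-1 : ℝ) ^ (i - 1) * ((bernOp k)^[i - 1] (bernBasis k v) x)

lemma bernBasis_nonneg (k v : ℕ) {x : ℝ} (hx : x ∈ Set.Icc (0 : ℝ) 1) :
    0 ≤ bernBasis k v x := by
  obtain ⟨h0, h1⟩ := hx
  have h2 : 0 ≤ 1 - x := by linarith
  unfold bernBasis
  positivity

lemma bernBasis_sum (k : ℕ) (x : ℝ) :
    ∑ v ∈ Finset.range (k + 1), bernBasis k v x = 1 := by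
  have := add_pow x (1 - x) k
  simp only [add_sub_cancel, one_pow] at this
  rw [show (1:ℝ) = (x + (1 - x)) ^ k by rw [add_sub_cancel, one_pow], add_pow]
  apply Finset.sum_congr rfl
  intro v _
  unfold bernBasis
  ring

lemma bernOp_apply (k : ℕ) (g : ℝ → ℝ) (x : ℝ) :
    bernOp k g x = ∑ v ∈ Finset.range (k + 1), g ((v : ℝ) / k) * bernBasis k v x := rfl

lemma iter_prop (k n : ℕ) (hk : 0 < k) :
    ∀ x ∈ Set.Icc (0 : ℝ) 1,
      (∀ v, 0 ≤ (bernOp k)^[n] (bernBasis k v) x) ∧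
      ∑ v ∈ Finset.range (k + 1), (bernOp k)^[n] (bernBasis k v) x = 1 := by
  induction n with
  | zero =>
    intro x hx
    exact ⟨fun v => bernBasis_nonneg k v hx, bernBasis_sum k x⟩
  | succ n ih =>
    intro x hx
    have key : ∀ j ∈ Finset.range (k + 1), ((j : ℝ) / k) ∈ Set.Icc (0 : ℝ) 1 := by
      intro j hj
      simp only [Finset.mem_range, Nat.lt_succ_iff] at hj
      constructor
      · positivity
      · rw [div_le_one (by exact_mod_cast hk)]
        exact_mod_cast hj
    constructor
    · intro v
      rw [Function.iterate_succ_apply', bernOp_apply]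
      apply Finset.sum_nonneg
      intro j hj
      exact mul_nonneg ((ih _ (key j hj)).1 v) (bernBasis_nonneg k j hx)
    · simp only [Function.iterate_succ_apply', bernOp_apply]
      rw [Finset.sum_comm]
      rw [show (1:ℝ) = ∑ j ∈ Finset.range (k+1), bernBasis k j x from (bernBasis_sum k x).symm]
      apply Finset.sum_congr rfl
      intro j hj
      rw [← Finset.sum_mul, (ih _ (key j hj)).2, one_mul]

lemma iterBernBasis_abs_sum_single (h k : ℕ) (hk : 0 < k) {x : ℝ}
    (hx : x ∈ Set.Icc (0 : ℝ) 1) :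
    ∑ v ∈ Finset.range (k + 1), |iterBernBasis h k v x| ≤ (2 : ℝ) ^ h - 1 := by
  have step : ∀ v, |iterBernBasis h k v x| ≤
      ∑ i ∈ Finset.Icc 1 h, (h.choose i : ℝ) * (bernOp k)^[i-1] (bernBasis k v) x := by
    intro v
    calc |iterBernBasis h k v x|
        ≤ ∑ i ∈ Finset.Icc 1 h,
            |(h.choose i : ℝ) * (-1 : ℝ) ^ (i - 1) * ((bernOp k)^[i - 1] (bernBasis k v) x)| :=
          Finset.abs_sum_le_sum_abs _ _
      _ ≤ _ := by
          apply Finset.sum_le_sum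
          intro i _
          rw [abs_mul, abs_mul, abs_pow, abs_neg, abs_one, one_pow, mul_one,
            Nat.abs_cast, abs_of_nonneg ((iter_prop k (i-1) hk x hx).1 v)]
  calc ∑ v ∈ Finset.range (k + 1), |iterBernBasis h k v x|
      ≤ ∑ v ∈ Finset.range (k + 1), ∑ i ∈ Finset.Icc 1 h,
          (h.choose i : ℝ) * (bernOp k)^[i-1] (bernBasis k v) x :=
        Finset.sum_le_sum fun v _ => step v
    _ = ∑ i ∈ Finset.Icc 1 h, (h.choose i : ℝ) *
          ∑ v ∈ Finset.range (k + 1), (bernOp k)^[i-1] (bernBasis k v) x := by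
        rw [Finset.sum_comm]
        exact Finset.sum_congr rfl fun i _ => (Finset.mul_sum _ _ _).symm
    _ = ∑ i ∈ Finset.Icc 1 h, (h.choose i : ℝ) := by
        apply Finset.sum_congr rfl
        intro i _
        rw [(iter_prop k (i-1) hk x hx).2, mul_one]
    _ = (2 : ℝ) ^ h - 1 := by
        have := Nat.sum_range_choose h
        have h2 : ∑ i ∈ Finset.range (h+1), (h.choose i : ℝ) = 2 ^ h := by
          exact_mod_cast congrArg (Nat.cast : ℕ → ℝ) this
        have : Finset.Icc 1 h = Finset.range (h+1) \ {0} := by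
          ext i
          simp [Finset.mem_Icc, Finset.mem_range, Nat.lt_succ_iff, Nat.one_le_iff_ne_zero]
          tauto
        rw [this, Finset.sum_sdiff_eq_sub (by simp), h2]
        simp

/-- For all positive integers `h, k, p` and every `w ∈ [0,1]^p`,
`Σ_{v ∈ {0,…,k}^p} Π_i |b^{(h)}_{v_i,k}(w_i)| ≤ (2^h − 1)^p`. -/
theorem iterBernBasis_abs_sum_le (h k p : ℕ) (hh : 0 < h) (hk : 0 < k) (hp : 0 < p)
    (w : Fin p → ℝ) (hw : ∀ i, w i ∈ Set.Icc (0 : ℝ) 1) :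
    ∑ v ∈ Fintype.piFinset (fun _ : Fin p => Finset.range (k + 1)),
        ∏ i, |iterBernBasis h k (v i) (w i)| ≤ ((2 : ℝ) ^ h - 1) ^ p := by
  rw [← Finset.prod_univ_sum (t := fun _ : Fin p => Finset.range (k + 1))
    (f := fun i v => |iterBernBasis h k v (w i)|)]
  calc ∏ i : Fin p, ∑ v ∈ Finset.range (k + 1), |iterBernBasis h k v (w i)|
      ≤ ∏ _i : Fin p, ((2 : ℝ) ^ h - 1) := by
        apply Finset.prod_le_prod
        · intro i _
          exact Finset.sum_nonneg fun v _ => abs_nonneg _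
        · intro i _
          exact iterBernBasis_abs_sum_single h k hk (hw i)
    _ = ((2 : ℝ) ^ h - 1) ^ p := by simp
end
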